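/- arXiv:1808.10158 — 3 statements merged into one kernel-verified Lean document; each statement's English description precedes it below -/
import Mathlib

section
/- Let T > 0 and α > 0, let p : ℝ → ℝ be continuous on [0,T], and let μ, ν be finite Borel measures on the interval (0,T) that are mutually singular. Assume that for every pair (σ,τ) of mutually singular finite Borel measures on (0,T) one has (−∫ p dσ + ∫ p dτ) − (−∫ p dμ + ∫ p dν) ≤ α(σ((0,T)) + τ((0,T))) − α(μ((0,T)) + ν((0,T))). Then: (a) |p(t)| ≤ α for every t ∈ (0,T); (b) −∫ p dμ + ∫ p dν = α(μ((0,T)) + ν((0,T))); (c) μ({t ∈ (0,T) : p(t) ≠ −α}) = 0 and ν({t ∈ (0,T) : p(t) ≠ α}) = 0. -/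
open MeasureTheory

theorem optimal_measure_adjoint_characterization
    (T α : ℝ) (hT : 0 < T) (hα : 0 < α)
    (p : ℝ → ℝ) (hp : ContinuousOn p (Set.Icc 0 T))
    (μ ν : Measure ℝ) [IsFiniteMeasure μ] [IsFiniteMeasure ν]
    (hμ : μ (Set.Ioo 0 T)ᶜ = 0) (hν : ν (Set.Ioo 0 T)ᶜ = 0)
    (hμν : μ ⟂ₘ ν)
    (hopt : ∀ σ τ : Measure ℝ, IsFiniteMeasure σ → IsFiniteMeasure τ →
      σ (Set.Ioo 0 T)ᶜ = 0 → τ (Set.Ioo 0 T)ᶜ = 0 → σ ⟂ₘ τ →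
      (-(∫ t, p t ∂σ) + ∫ t, p t ∂τ) - (-(∫ t, p t ∂μ) + ∫ t, p t ∂ν)
        ≤ α * ((σ (Set.Ioo 0 T)).toReal + (τ (Set.Ioo 0 T)).toReal)
          - α * ((μ (Set.Ioo 0 T)).toReal + (ν (Set.Ioo 0 T)).toReal)) :
    (∀ t ∈ Set.Ioo 0 T, |p t| ≤ α) ∧
    (-(∫ t, p t ∂μ) + ∫ t, p t ∂ν
        = α * ((μ (Set.Ioo 0 T)).toReal + (ν (Set.Ioo 0 T)).toReal)) ∧
    (μ {t | t ∈ Set.Ioo 0 T ∧ p t ≠ -α} = 0) ∧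
    (ν {t | t ∈ Set.Ioo 0 T ∧ p t ≠ α} = 0) := by
  have hmem : ∀ (m : Measure ℝ), m (Set.Ioo 0 T)ᶜ = 0 →
      ∀ᵐ t ∂m, t ∈ Set.Ioo 0 T := by
    intro m hm
    rw [ae_iff]
    convert hm using 2
    ext x; simp
  obtain ⟨C, hC⟩ := isCompact_Icc.exists_bound_of_continuousOn hp
  have hInt : ∀ (m : Measure ℝ), IsFiniteMeasure m → m (Set.Ioo 0 T)ᶜ = 0 →
      Integrable p m := by
    intro m hfin hm
    haveI := hfin
    have hsm : AEStronglyMeasurable p m := by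
      have h1 : AEStronglyMeasurable p (m.restrict (Set.Ioo 0 T)) :=
        (hp.mono Set.Ioo_subset_Icc_self).aestronglyMeasurable measurableSet_Ioo
      rwa [Measure.restrict_eq_self_of_ae_mem (hmem m hm)] at h1
    exact ⟨hsm, HasFiniteIntegral.of_bounded ((hmem m hm).mono fun t ht =>
      hC t (Set.Ioo_subset_Icc_self ht))⟩
  have hIμ : Integrable p μ := hInt μ inferInstance hμ
  have hIν : Integrable p ν := hInt ν inferInstance hν
  have hμtop : μ (Set.Ioo 0 T) ≠ ⊤ := measure_ne_top μ _
  have hνtop : ν (Set.Ioo 0 T) ≠ ⊤ := measure_ne_top ν _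
  set F : ℝ := -(∫ t, p t ∂μ) + ∫ t, p t ∂ν with hF
  set M : ℝ := (μ (Set.Ioo 0 T)).toReal + (ν (Set.Ioo 0 T)).toReal with hM
  -- Step 1: α * M ≤ F, using (0,0)
  have h0 := hopt 0 0 inferInstance inferInstance (by simp) (by simp)
    (Measure.MutuallySingular.zero_left)
  simp only [integral_zero_measure, Measure.coe_zero, Pi.zero_apply,
    ENNReal.toReal_zero, neg_zero, add_zero, zero_sub, mul_zero, zero_add] at h0
  have hge : α * M ≤ F := by linarith
  -- Step 2: F ≤ α * M, using (μ+μ, ν+ν)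
  have h2 := hopt (μ + μ) (ν + ν) inferInstance inferInstance
    (by simp [hμ]) (by simp [hν])
    ((hμν.add_left hμν).add_right (hμν.add_left hμν))
  rw [integral_add_measure hIμ hIμ, integral_add_measure hIν hIν] at h2
  simp only [Measure.coe_add, Pi.add_apply, ENNReal.toReal_add hμtop hμtop,
    ENNReal.toReal_add hνtop hνtop] at h2
  have hb : F = α * M := by
    apply le_antisymm _ hge
    have : F + F - F ≤ α * (M + M) - α * M := by
      rw [hF, hM] at *
      linarith
    linarith
  -- Part (a)
  have ha : ∀ t ∈ Set.Ioo 0 T, |p t| ≤ α := by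
    intro t ht
    have hdmem : (Measure.dirac t) (Set.Ioo 0 T)ᶜ = 0 := by
      rw [Measure.dirac_apply' _ measurableSet_Ioo.compl]
      simp [ht]
    have hd1 : (Measure.dirac t) (Set.Ioo 0 T) = 1 :=
      Measure.dirac_apply_of_mem ht
    have hl := hopt (Measure.dirac t) 0 inferInstance inferInstance hdmem (by simp)
      Measure.MutuallySingular.zero_right
    have hr := hopt 0 (Measure.dirac t) inferInstance inferInstance (by simp) hdmem
      Measure.MutuallySingular.zero_left
    rw [integral_dirac] at hl hr
    simp only [integral_zero_measure, Measure.coe_zero, Pi.zero_apply,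
      ENNReal.toReal_zero, add_zero, zero_add, neg_zero, hd1, ENNReal.toReal_one] at hl hr
    rw [abs_le]
    constructor <;> [linarith; linarith]
  -- a.e. bounds
  have haeμ : ∀ᵐ t ∂μ, t ∈ Set.Ioo 0 T := hmem μ hμ
  have haeν : ∀ᵐ t ∂ν, t ∈ Set.Ioo 0 T := hmem ν hν
  have hμuniv : μ Set.univ = μ (Set.Ioo 0 T) := by
    rw [← measure_add_measure_compl measurableSet_Ioo, hμ, add_zero]
  have hνuniv : ν Set.univ = ν (Set.Ioo 0 T) := by
    rw [← measure_add_measure_compl measurableSet_Ioo, hν, add_zero]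
  have hA : ∫ t, (-p t) ∂μ ≤ α * (μ (Set.Ioo 0 T)).toReal := by
    have : ∫ t, (-p t) ∂μ ≤ ∫ _t, α ∂μ := by
      apply integral_mono_ae hIμ.neg (integrable_const α)
      exact haeμ.mono fun t ht => by
        have := ha t ht; rw [abs_le] at this; simp only [Pi.neg_apply]; linarith
    rwa [integral_const, measureReal_def, hμuniv, smul_eq_mul, mul_comm] at this
  have hB : ∫ t, p t ∂ν ≤ α * (ν (Set.Ioo 0 T)).toReal := by
    have : ∫ t, p t ∂ν ≤ ∫ _t, α ∂ν := by
      apply integral_mono_ae hIν (integrable_const α)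
      exact haeν.mono fun t ht => by
        have := ha t ht; rw [abs_le] at this; linarith
    rwa [integral_const, measureReal_def, hνuniv, smul_eq_mul, mul_comm] at this
  have hnegμ : ∫ t, (-p t) ∂μ = -(∫ t, p t ∂μ) := integral_neg p
  have hAeq : ∫ t, (-p t) ∂μ = α * (μ (Set.Ioo 0 T)).toReal := by
    rw [hF, hM] at hb
    rw [hnegμ]
    linarith [hA, hB, hb]
  have hBeq : ∫ t, p t ∂ν = α * (ν (Set.Ioo 0 T)).toReal := by
    rw [hF, hM] at hb
    linarith [hA, hB, hb, hnegμ]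
  -- Part (c) for μ
  have hcμ : μ {t | t ∈ Set.Ioo 0 T ∧ p t ≠ -α} = 0 := by
    have hint : Integrable (fun t => α + p t) μ := (integrable_const α).add hIμ
    have hnn : 0 ≤ᵐ[μ] fun t => α + p t := haeμ.mono fun t ht => by
      have := ha t ht; rw [abs_le] at this; simp; linarith
    have hz : ∫ t, (α + p t) ∂μ = 0 := by
      rw [integral_add (integrable_const α) hIμ, integral_const, measureReal_def, hμuniv,
        smul_eq_mul]
      have : ∫ t, p t ∂μ = -(α * (μ (Set.Ioo 0 T)).toReal) := by
        rw [← hAeq, hnegμ]; ring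
      rw [this]; ring
    have hae0 : (fun t => α + p t) =ᵐ[μ] 0 :=
      (integral_eq_zero_iff_of_nonneg_ae hnn hint).mp hz
    have : μ {t | ¬ (α + p t = 0)} = 0 := by
      have := hae0
      rw [Filter.EventuallyEq, ae_iff] at this
      simpa using this
    refine measure_mono_null ?_ this
    intro t ht
    simp only [Set.mem_setOf_eq] at ht ⊢
    intro h
    exact ht.2 (by linarith)
  -- Part (c) for ν
  have hcν : ν {t | t ∈ Set.Ioo 0 T ∧ p t ≠ α} = 0 := by
    have hint : Integrable (fun t => α - p t) ν := (integrable_const α).sub hIν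
    have hnn : 0 ≤ᵐ[ν] fun t => α - p t := haeν.mono fun t ht => by
      have := ha t ht; rw [abs_le] at this; simp; linarith
    have hz : ∫ t, (α - p t) ∂ν = 0 := by
      rw [integral_sub (integrable_const α) hIν, integral_const, measureReal_def, hνuniv,
        smul_eq_mul, hBeq]
      ring
    have hae0 : (fun t => α - p t) =ᵐ[ν] 0 :=
      (integral_eq_zero_iff_of_nonneg_ae hnn hint).mp hz
    have : ν {t | ¬ (α - p t = 0)} = 0 := by
      have := hae0
      rw [Filter.EventuallyEq, ae_iff] at this
      simpa using this
    refine measure_mono_null ?_ this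
    intro t ht
    simp only [Set.mem_setOf_eq] at ht ⊢
    intro h
    exact ht.2 (by linarith)
  exact ⟨ha, hb, hcμ, hcν⟩
end

section
/- Let T > 0, α > 0, γ > 0 and 𝔭, v̄ ∈ L²(0,T). Then the following are equivalent: (i) for every v ∈ L²(0,T), (γ/α)·∫₀ᵀ (𝔭(s) − v̄(s))(v(s) − v̄(s)) ds ≤ ‖v‖_{L¹(0,T)} − ‖v̄‖_{L¹(0,T)}; (ii) for almost every s ∈ (0,T), v̄(s) = max(0, 𝔭(s) − α/γ) + min(0, 𝔭(s) + α/γ). -/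
open MeasureTheory

private lemma pt_char {c q w : ℝ} (hc : 0 < c) (h1 : |q - w| ≤ c)
    (h2 : (q - w) * w = c * |w|) : w = max 0 (q - c) + min 0 (q + c) := by
  rcases lt_trichotomy w 0 with hw | hw | hw
  · rw [abs_of_neg hw] at h2
    have hq : q = w - c := by
      have h3 : (q - w + c) * w = 0 := by ring_nf; nlinarith [h2]
      have := (mul_eq_zero.mp h3).resolve_right hw.ne
      linarith
    have hqc : q + c = w := by rw [hq]; ring
    rw [max_eq_left (by nlinarith), hqc, min_eq_right hw.le, zero_add]
  · subst hw
    rw [sub_zero] at h1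
    rw [max_eq_left (by cases abs_le.mp h1 with | intro a b => linarith),
      min_eq_left (by cases abs_le.mp h1 with | intro a b => linarith), add_zero]
  · rw [abs_of_pos hw] at h2
    have hq : q = w + c := by
      have h3 : (q - w - c) * w = 0 := by ring_nf; nlinarith [h2]
      have := (mul_eq_zero.mp h3).resolve_right hw.ne'
      linarith
    have hqc : q - c = w := by rw [hq]; ring
    rw [hqc, max_eq_right hw.le, min_eq_left (by nlinarith), add_zero]

private lemma pt_char' {c q w : ℝ} (hc : 0 < c) (hw : w = max 0 (q - c) + min 0 (q + c)) :
    |q - w| ≤ c ∧ (q - w) * w = c * |w| := by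
  rcases le_total c q with h | h
  · have hmax : max 0 (q - c) = q - c := max_eq_right (by linarith)
    have hmin : min 0 (q + c) = 0 := min_eq_left (by linarith)
    rw [hmax, hmin, add_zero] at hw
    subst hw
    constructor
    · rw [show q - (q - c) = c by ring, abs_of_pos hc]
    · rw [abs_of_nonneg (by linarith)]; ring
  rcases le_total q (-c) with h' | h'
  · have hmax : max 0 (q - c) = 0 := max_eq_left (by linarith)
    have hmin : min 0 (q + c) = q + c := min_eq_right (by linarith)
    rw [hmax, hmin, zero_add] at hw
    subst hw
    constructor
    · rw [show q - (q + c) = -c by ring, abs_neg, abs_of_pos hc]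
    · rw [abs_of_nonpos (by linarith)]; ring
  · have hmax : max 0 (q - c) = 0 := max_eq_left (by linarith)
    have hmin : min 0 (q + c) = 0 := min_eq_left (by linarith)
    rw [hmax, hmin, add_zero] at hw
    subst hw
    constructor
    · rw [sub_zero, abs_le]; constructor <;> linarith
    · simp

private lemma pt_ineq {c q w v : ℝ} (h1 : |q - w| ≤ c)
    (h2 : (q - w) * w = c * |w|) : (q - w) * (v - w) ≤ c * (|v| - |w|) := by
  have key : (q - w) * v ≤ c * |v| :=
    calc (q - w) * v ≤ |(q - w) * v| := le_abs_self _
      _ = |q - w| * |v| := abs_mul _ _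
      _ ≤ c * |v| := mul_le_mul_of_nonneg_right h1 (abs_nonneg _)
  nlinarith [h2, key]

private theorem aux_subdiff {X : Type*} [MeasurableSpace X] (μ : Measure X)
    [IsFiniteMeasure μ] (α γ : ℝ) (hα : 0 < α) (hγ : 0 < γ)
    (p vbar : Lp ℝ 2 μ) :
    (∀ v : Lp ℝ 2 μ,
        (γ / α) * ∫ s, (p s - vbar s) * (v s - vbar s) ∂μ
          ≤ (∫ s, |v s| ∂μ) - ∫ s, |vbar s| ∂μ) ↔
      (∀ᵐ s ∂μ, vbar s = max 0 (p s - α / γ) + min 0 (p s + α / γ)) := by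
  set c : ℝ := α / γ with hcdef
  have hc : 0 < c := div_pos hα hγ
  have hk : 0 < γ / α := div_pos hγ hα
  have hck : c * (γ / α) = 1 := by rw [hcdef]; field_simp
  have hkc : γ / α * c = 1 := by rw [mul_comm]; exact hck
  -- basic integrability facts
  have hint2 : ∀ v : Lp ℝ 2 μ, Integrable (fun s => v s) μ :=
    fun v => (Lp.memLp v).integrable one_le_two
  have hab : ∀ v : Lp ℝ 2 μ, Integrable (fun s => |v s|) μ := fun v => (hint2 v).abs
  have hprod : ∀ v : Lp ℝ 2 μ, Integrable (fun s => (p s - vbar s) * (v s - vbar s)) μ := by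
    intro v
    have h := L2.integrable_inner (𝕜 := ℝ) (p - vbar) (v - vbar)
    refine h.congr ?_
    filter_upwards [Lp.coeFn_sub p vbar, Lp.coeFn_sub v vbar] with s h1 h2
    simp only [h1, h2, Pi.sub_apply, RCLike.inner_apply, conj_trivial]
    ring
  have hgi : Integrable (fun s => p s - vbar s) μ := (hint2 p).sub (hint2 vbar)
  have hgW : Integrable (fun s => (p s - vbar s) * vbar s) μ := by
    have h := L2.integrable_inner (𝕜 := ℝ) (p - vbar) vbar
    refine h.congr ?_
    filter_upwards [Lp.coeFn_sub p vbar] with s h1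
    simp only [h1, Pi.sub_apply, RCLike.inner_apply, conj_trivial]
    ring
  constructor
  · intro h
    -- Step A : c * ∫ |vbar| ≤ ∫ (p - vbar) * vbar
    have stepA : c * ∫ s, |vbar s| ∂μ ≤ ∫ s, (p s - vbar s) * vbar s ∂μ := by
      have h0 := h 0
      have e1 : ∫ s, (p s - vbar s) * ((0 : Lp ℝ 2 μ) s - vbar s) ∂μ
          = -∫ s, (p s - vbar s) * vbar s ∂μ := by
        rw [← integral_neg]
        refine integral_congr_ae ?_
        filter_upwards [Lp.coeFn_zero ℝ 2 μ] with s hs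
        rw [hs]
        simp only [Pi.zero_apply]
        ring
      have e2 : ∫ s, |(0 : Lp ℝ 2 μ) s| ∂μ = 0 := by
        have hz : (fun s => |(0 : Lp ℝ 2 μ) s|) =ᵐ[μ] fun _ => (0:ℝ) := by
          filter_upwards [Lp.coeFn_zero ℝ 2 μ] with s hs
          rw [hs]
          simp
        rw [integral_congr_ae hz, integral_zero]
      rw [e1, e2] at h0
      have h1 : ∫ s, |vbar s| ∂μ ≤ (γ / α) * ∫ s, (p s - vbar s) * vbar s ∂μ := by
        nlinarith [h0]
      calc c * ∫ s, |vbar s| ∂μ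
          ≤ c * ((γ / α) * ∫ s, (p s - vbar s) * vbar s ∂μ) :=
            mul_le_mul_of_nonneg_left h1 hc.le
        _ = ∫ s, (p s - vbar s) * vbar s ∂μ := by rw [← mul_assoc, hck, one_mul]
    -- Key indicator estimate
    have key : ∀ S : Set X, MeasurableSet S → ∀ a : ℝ, |a| ≤ 1 →
        a * ∫ s in S, (p s - vbar s) ∂μ ≤ c * (μ S).toReal := by
      intro S hS a ha
      have hμS : μ S ≠ ⊤ := measure_ne_top μ S
      have φmem : MemLp (S.indicator fun _ => a) 2 μ :=
        memLp_indicator_const 2 hS a (Or.inr hμS)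
      set v : Lp ℝ 2 μ := vbar + φmem.toLp _ with hvdef
      have hv := h v
      have hVW : (fun s => v s - vbar s) =ᵐ[μ] S.indicator fun _ => a := by
        filter_upwards [Lp.coeFn_add vbar (φmem.toLp _), φmem.coeFn_toLp] with s h1 h2
        rw [hvdef]
        simp only [h1, Pi.add_apply, h2]
        ring
      have e1 : ∫ s, (p s - vbar s) * (v s - vbar s) ∂μ
          = a * ∫ s in S, (p s - vbar s) ∂μ := by
        calc ∫ s, (p s - vbar s) * (v s - vbar s) ∂μ
            = ∫ s, S.indicator (fun s => (p s - vbar s) * a) s ∂μ := by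
              refine integral_congr_ae ?_
              filter_upwards [hVW] with s hs
              rw [hs]
              by_cases hsS : s ∈ S
              · simp [Set.indicator_of_mem hsS]
              · simp [Set.indicator_of_notMem hsS]
          _ = ∫ s in S, (p s - vbar s) * a ∂μ := integral_indicator hS
          _ = (∫ s in S, (p s - vbar s) ∂μ) * a := integral_mul_const a _
          _ = a * ∫ s in S, (p s - vbar s) ∂μ := mul_comm _ _
      have e2 : (∫ s, |v s| ∂μ) - ∫ s, |vbar s| ∂μ ≤ (μ S).toReal := by
        have hI1 : Integrable (S.indicator fun _ => (1:ℝ)) μ :=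
          memLp_one_iff_integrable.mp (memLp_indicator_const 1 hS 1 (Or.inr hμS))
        have hsub : (∫ s, |v s| ∂μ) - ∫ s, |vbar s| ∂μ
            = ∫ s, (|v s| - |vbar s|) ∂μ := (integral_sub (hab v) (hab vbar)).symm
        rw [hsub]
        have hle : (fun s => |v s| - |vbar s|) ≤ᵐ[μ] S.indicator fun _ => (1:ℝ) := by
          filter_upwards [hVW] with s hs
          by_cases hsS : s ∈ S
          · rw [Set.indicator_of_mem hsS] at hs ⊢
            calc |v s| - |vbar s| ≤ |v s - vbar s| := abs_sub_abs_le_abs_sub _ _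
              _ = |a| := by rw [hs]
              _ ≤ 1 := ha
          · rw [Set.indicator_of_notMem hsS] at hs ⊢
            have hvv : v s = vbar s := by
              have := sub_eq_zero.mp hs
              linarith [this]
            rw [hvv]; simp
        have hmono : ∫ s, (|v s| - |vbar s|) ∂μ
            ≤ ∫ s, S.indicator (fun _ => (1:ℝ)) s ∂μ :=
          integral_mono_ae ((hab v).sub (hab vbar)) hI1 hle
        calc ∫ s, (|v s| - |vbar s|) ∂μ
            ≤ ∫ s, S.indicator (fun _ => (1:ℝ)) s ∂μ := hmono
          _ = (μ S).toReal := by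
              rw [integral_indicator hS, setIntegral_const, smul_eq_mul, mul_one, measureReal_def]
      rw [e1] at hv
      have h3 : (γ / α) * (a * ∫ s in S, (p s - vbar s) ∂μ) ≤ (μ S).toReal :=
        le_trans hv e2
      calc a * ∫ s in S, (p s - vbar s) ∂μ
          = c * ((γ / α) * (a * ∫ s in S, (p s - vbar s) ∂μ)) := by
            rw [← mul_assoc, hck, one_mul]
        _ ≤ c * (μ S).toReal := mul_le_mul_of_nonneg_left h3 hc.le
    -- measurable representative of g := p - vbar
    have hgm : AEMeasurable (fun s => p s - vbar s) μ :=
      ((Lp.aestronglyMeasurable p).sub (Lp.aestronglyMeasurable vbar)).aemeasurable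
    set g' : X → ℝ := hgm.mk _ with hg'def
    have hg'meas : Measurable g' := hgm.measurable_mk
    have hgg' : (fun s => p s - vbar s) =ᵐ[μ] g' := hgm.ae_eq_mk
    have hupper : ∀ᵐ s ∂μ, g' s ≤ c := by
      have hnull : ∀ n : ℕ, μ {s | c + 1 / (n + 1) ≤ g' s} = 0 := by
        intro n
        set ε : ℝ := 1 / (n + 1) with hεdef
        have hε : 0 < ε := by positivity
        set S := {s | c + ε ≤ g' s} with hSdef
        have hS : MeasurableSet S := measurableSet_le measurable_const hg'meas
        have h1 := key S hS 1 (by norm_num)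
        rw [one_mul] at h1
        have heq : ∫ s in S, (p s - vbar s) ∂μ = ∫ s in S, g' s ∂μ :=
          integral_congr_ae (ae_restrict_of_ae hgg')
        have h2 : (c + ε) * (μ S).toReal ≤ ∫ s in S, g' s ∂μ :=
          setIntegral_ge_of_const_le_real hS (measure_ne_top μ S) (fun x hx => hx)
            (hgi.integrableOn.congr_fun_ae (ae_restrict_of_ae hgg'))
        have h3 : ε * (μ S).toReal ≤ 0 := by
          rw [heq] at h1; nlinarith [h1, h2]
        have h4 : (μ S).toReal = 0 :=
          le_antisymm (by nlinarith [ENNReal.toReal_nonneg (a := μ S)]) ENNReal.toReal_nonneg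
        exact ((ENNReal.toReal_eq_zero_iff _).mp h4).resolve_right (measure_ne_top μ S)
      have hsub : {s | c < g' s} ⊆ ⋃ n : ℕ, {s | c + 1 / (n + 1) ≤ g' s} := by
        intro s hs
        simp only [Set.mem_setOf_eq] at hs
        obtain ⟨n, hn⟩ := exists_nat_one_div_lt (ε := g' s - c) (by linarith)
        exact Set.mem_iUnion.mpr ⟨n, by simp only [Set.mem_setOf_eq]; push_cast; linarith [hn]⟩
      have hnull2 : μ {s | c < g' s} = 0 :=
        measure_mono_null hsub (measure_iUnion_null hnull)
      refine (ae_iff.mpr ?_)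
      convert hnull2 using 2
      ext s
      simp [not_le]
    have hlower : ∀ᵐ s ∂μ, -c ≤ g' s := by
      have hnull : ∀ n : ℕ, μ {s | g' s ≤ -(c + 1 / (n + 1))} = 0 := by
        intro n
        set ε : ℝ := 1 / (n + 1) with hεdef
        have hε : 0 < ε := by positivity
        set S := {s | g' s ≤ -(c + ε)} with hSdef
        have hS : MeasurableSet S := measurableSet_le hg'meas measurable_const
        have h1 := key S hS (-1) (by norm_num)
        rw [neg_one_mul] at h1
        have heq : ∫ s in S, (p s - vbar s) ∂μ = ∫ s in S, g' s ∂μ :=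
          integral_congr_ae (ae_restrict_of_ae hgg')
        have h2 : (c + ε) * (μ S).toReal ≤ ∫ s in S, (-g' s) ∂μ :=
          setIntegral_ge_of_const_le_real hS (measure_ne_top μ S)
            (fun x hx => by
              have hx' : g' x ≤ -(c + ε) := hx
              linarith)
            ((hgi.integrableOn.congr_fun_ae (ae_restrict_of_ae hgg')).neg)
        rw [integral_neg] at h2
        have h3 : ε * (μ S).toReal ≤ 0 := by
          rw [heq] at h1; nlinarith [h1, h2]
        have h4 : (μ S).toReal = 0 :=
          le_antisymm (by nlinarith [ENNReal.toReal_nonneg (a := μ S)]) ENNReal.toReal_nonneg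
        exact ((ENNReal.toReal_eq_zero_iff _).mp h4).resolve_right (measure_ne_top μ S)
      have hsub : {s | g' s < -c} ⊆ ⋃ n : ℕ, {s | g' s ≤ -(c + 1 / (n + 1))} := by
        intro s hs
        simp only [Set.mem_setOf_eq] at hs
        obtain ⟨n, hn⟩ := exists_nat_one_div_lt (ε := -c - g' s) (by linarith)
        exact Set.mem_iUnion.mpr ⟨n, by simp only [Set.mem_setOf_eq]; push_cast; linarith [hn]⟩
      have hnull2 : μ {s | g' s < -c} = 0 :=
        measure_mono_null hsub (measure_iUnion_null hnull)
      refine (ae_iff.mpr ?_)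
      convert hnull2 using 2
      ext s
      simp [not_le]
    have habs : ∀ᵐ s ∂μ, |p s - vbar s| ≤ c := by
      filter_upwards [hupper, hlower, hgg'] with s h1 h2 h3
      rw [h3]
      exact abs_le.mpr ⟨h2, h1⟩
    -- Step C : a.e. equality (p - vbar) * vbar = c * |vbar|
    have stepC : ∀ᵐ s ∂μ, (p s - vbar s) * vbar s = c * |vbar s| := by
      have hnonneg : 0 ≤ᵐ[μ] fun s => c * |vbar s| - (p s - vbar s) * vbar s := by
        filter_upwards [habs] with s hs
        have hle : (p s - vbar s) * vbar s ≤ c * |vbar s| :=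
          calc (p s - vbar s) * vbar s ≤ |(p s - vbar s) * vbar s| := le_abs_self _
            _ = |p s - vbar s| * |vbar s| := abs_mul _ _
            _ ≤ c * |vbar s| := mul_le_mul_of_nonneg_right hs (abs_nonneg _)
        simp only [Pi.zero_apply]
        linarith
      have hintf : Integrable (fun s => c * |vbar s| - (p s - vbar s) * vbar s) μ :=
        ((hab vbar).const_mul c).sub hgW
      have hzero : ∫ s, (c * |vbar s| - (p s - vbar s) * vbar s) ∂μ = 0 := by
        have hge : 0 ≤ ∫ s, (c * |vbar s| - (p s - vbar s) * vbar s) ∂μ :=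
          integral_nonneg_of_ae hnonneg
        have heq : ∫ s, (c * |vbar s| - (p s - vbar s) * vbar s) ∂μ
            = c * (∫ s, |vbar s| ∂μ) - ∫ s, (p s - vbar s) * vbar s ∂μ := by
          rw [integral_sub ((hab vbar).const_mul c) hgW, integral_const_mul]
        rw [heq] at hge ⊢
        linarith [stepA]
      have hae := (integral_eq_zero_iff_of_nonneg_ae hnonneg hintf).mp hzero
      filter_upwards [hae] with s hs
      have hs' : c * |vbar s| - (p s - vbar s) * vbar s = 0 := by simpa using hs
      linarith
    filter_upwards [habs, stepC] with s h1 h2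
    exact pt_char hc h1 h2
  · intro h v
    have hpt : ∀ᵐ s ∂μ, (p s - vbar s) * (v s - vbar s) ≤ c * (|v s| - |vbar s|) := by
      filter_upwards [h] with s hs
      obtain ⟨h1, h2⟩ := pt_char' hc hs
      exact pt_ineq h1 h2
    have hI2 : Integrable (fun s => c * (|v s| - |vbar s|)) μ :=
      ((hab v).sub (hab vbar)).const_mul c
    have hmono : ∫ s, (p s - vbar s) * (v s - vbar s) ∂μ
        ≤ ∫ s, c * (|v s| - |vbar s|) ∂μ :=
      integral_mono_ae (hprod v) hI2 hpt
    rw [integral_const_mul, integral_sub (hab v) (hab vbar)] at hmono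
    calc (γ / α) * ∫ s, (p s - vbar s) * (v s - vbar s) ∂μ
        ≤ (γ / α) * (c * ((∫ s, |v s| ∂μ) - ∫ s, |vbar s| ∂μ)) :=
          mul_le_mul_of_nonneg_left hmono hk.le
      _ = (∫ s, |v s| ∂μ) - ∫ s, |vbar s| ∂μ := by rw [← mul_assoc, hkc, one_mul]

/-- The subdifferential inclusion `(γ/α)(𝔭 − v̄) ∈ ∂‖·‖_{L¹}(v̄)` is equivalent to the
pointwise soft-thresholding formula for `v̄`. -/
theorem subdifferential_iff_soft_thresholding
    (T α γ : ℝ) (hT : 0 < T) (hα : 0 < α) (hγ : 0 < γ)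
    (p vbar : Lp ℝ 2 (volume.restrict (Set.Ioo 0 T))) :
    (∀ v : Lp ℝ 2 (volume.restrict (Set.Ioo 0 T)),
        (γ / α) * ∫ s, (p s - vbar s) * (v s - vbar s) ∂(volume.restrict (Set.Ioo 0 T))
          ≤ (∫ s, |v s| ∂(volume.restrict (Set.Ioo 0 T)))
            - ∫ s, |vbar s| ∂(volume.restrict (Set.Ioo 0 T))) ↔
      (∀ᵐ s ∂(volume.restrict (Set.Ioo 0 T)),
        vbar s = max 0 (p s - α / γ) + min 0 (p s + α / γ)) := by
  haveI : IsFiniteMeasure (volume.restrict (Set.Ioo (0:ℝ) T)) := by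
    constructor
    rw [Measure.restrict_apply_univ, Real.volume_Ioo]
    exact ENNReal.ofReal_lt_top
  exact aux_subdiff _ α γ hα hγ p vbar
end

section
/- Let T > 0, m ≥ 1 an integer, H a real Hilbert space, K : L²((0,T);ℝ^m) × ℝ^m → H a continuous linear map with Hilbert-space adjoint K*, y_d ∈ H, α₁,…,α_m > 0, γ > 0 and κ ≥ 0. A pair (v̄,c̄) ∈ L²((0,T);ℝ^m) × ℝ^m minimizes J̃_γ(v,c) := (1/2)‖K(v,c) − y_d‖²_H + Σ_{i=1}^m αᵢ‖vᵢ‖_{L¹(0,T)} + (γ/2)Σ_{i=1}^m‖vᵢ‖²_{L²(0,T)} + (κ/2)‖c‖²_{ℝ^m} over L²((0,T);ℝ^m) × ℝ^m if and only if, writing (𝔭,q) := K*(K(v̄,c̄) − y_d) ∈ L²((0,T);ℝ^m) × ℝ^m, one has: (1) for each i = 1,…,m, v̄ᵢ(s) = max(0, −(1/γ)𝔭ᵢ(s) − αᵢ/γ) + min(0, −(1/γ)𝔭ᵢ(s) + αᵢ/γ) for almost every s ∈ (0,T), and (2) q + κ·c̄ = 0 in ℝ^m. -/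
open MeasureTheory RealInnerProductSpace

/-- The regularized cost functional `J̃_γ` of problem (P̃_γ). -/
noncomputable def regCost (T : ℝ) (m : ℕ) {H : Type*} [NormedAddCommGroup H]
    [InnerProductSpace ℝ H]
    (K : (Lp (EuclideanSpace ℝ (Fin m)) 2 (volume.restrict (Set.Ioo 0 T)) ×
      EuclideanSpace ℝ (Fin m)) →L[ℝ] H)
    (yd : H) (α : Fin m → ℝ) (γ κ : ℝ)
    (z : Lp (EuclideanSpace ℝ (Fin m)) 2 (volume.restrict (Set.Ioo 0 T)) ×
      EuclideanSpace ℝ (Fin m)) : ℝ :=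
  (1 / 2) * ‖K z - yd‖ ^ 2
    + ∑ i, α i * ∫ t, |z.1 t i| ∂(volume.restrict (Set.Ioo 0 T))
    + (γ / 2) * ∑ i, ∫ t, (z.1 t i) ^ 2 ∂(volume.restrict (Set.Ioo 0 T))
    + (κ / 2) * ‖z.2‖ ^ 2

/-! ### Auxiliary real arithmetic lemmas about the soft-threshold operator -/

/-- The scalar soft-thresholding (prox) operator. -/
noncomputable def softThr (γ a p : ℝ) : ℝ :=
  max 0 (-(1 / γ) * p - a / γ) + min 0 (-(1 / γ) * p + a / γ)

lemma softThr_opt {γ a : ℝ} (hγ : 0 < γ) (ha : 0 ≤ a) (p w : ℝ) :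
    0 ≤ (γ * softThr γ a p + p) * (w - softThr γ a p) + a * (|w| - |softThr γ a p|) := by
  have hγ' : γ ≠ 0 := ne_of_gt hγ
  have e1 : -(1/γ) * p - a / γ = (-p - a)/γ := by ring
  have e2 : -(1/γ) * p + a / γ = (-p + a)/γ := by ring
  unfold softThr
  rw [e1, e2]
  rcases le_total p (-a) with hp | hp
  · have h1 : (0:ℝ) ≤ (-p - a)/γ := div_nonneg (by linarith) hγ.le
    have h2 : (0:ℝ) ≤ (-p + a)/γ := div_nonneg (by linarith) hγ.le
    rw [max_eq_right h1, min_eq_left h2, add_zero, abs_of_nonneg h1]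
    have key : γ * ((-p - a)/γ) = -p - a := by field_simp
    rcases abs_cases w with ⟨hw, hw'⟩ | ⟨hw, hw'⟩ <;> nlinarith
  rcases le_total a p with hp2 | hp2
  · have h1 : (-p - a)/γ ≤ 0 := div_nonpos_of_nonpos_of_nonneg (by linarith) hγ.le
    have h2 : (-p + a)/γ ≤ 0 := div_nonpos_of_nonpos_of_nonneg (by linarith) hγ.le
    rw [max_eq_left h1, min_eq_right h2, zero_add, abs_of_nonpos h2]
    have key : γ * ((-p + a)/γ) = -p + a := by field_simp
    rcases abs_cases w with ⟨hw, hw'⟩ | ⟨hw, hw'⟩ <;> nlinarith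
  · have h1 : (-p - a)/γ ≤ 0 := div_nonpos_of_nonpos_of_nonneg (by linarith) hγ.le
    have h2 : (0:ℝ) ≤ (-p + a)/γ := div_nonneg (by linarith) hγ.le
    rw [max_eq_left h1, min_eq_left h2, zero_add, abs_zero]
    rcases abs_cases w with ⟨hw, hw'⟩ | ⟨hw, hw'⟩ <;> nlinarith

lemma softThr_lb {γ a : ℝ} (hγ : 0 < γ) (ha : 0 ≤ a) (p v : ℝ) :
    (γ * v + p) * (softThr γ a p - v) + a * (|softThr γ a p| - |v|)
      ≤ -γ * (softThr γ a p - v)^2 := by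
  nlinarith [softThr_opt hγ ha p v]

lemma softThr_abs_le {γ a : ℝ} (hγ : 0 < γ) (ha : 0 ≤ a) (p : ℝ) :
    |softThr γ a p| ≤ |p| / γ := by
  have hγ' : γ ≠ 0 := ne_of_gt hγ
  have e1 : -(1/γ) * p - a / γ = (-p - a)/γ := by ring
  have e2 : -(1/γ) * p + a / γ = (-p + a)/γ := by ring
  unfold softThr
  rw [e1, e2]
  rcases le_total p (-a) with hp | hp
  · have h1 : (0:ℝ) ≤ (-p - a)/γ := div_nonneg (by linarith) hγ.le
    have h2 : (0:ℝ) ≤ (-p + a)/γ := div_nonneg (by linarith) hγ.le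
    rw [max_eq_right h1, min_eq_left h2, add_zero, abs_of_nonneg h1]
    gcongr
    rcases abs_cases p with ⟨hw, hw'⟩ | ⟨hw, hw'⟩ <;> linarith
  rcases le_total a p with hp2 | hp2
  · have h1 : (-p - a)/γ ≤ 0 := div_nonpos_of_nonpos_of_nonneg (by linarith) hγ.le
    have h2 : (-p + a)/γ ≤ 0 := div_nonpos_of_nonpos_of_nonneg (by linarith) hγ.le
    rw [max_eq_left h1, min_eq_right h2, zero_add, abs_of_nonpos h2]
    rw [← neg_div]
    gcongr
    rcases abs_cases p with ⟨hw, hw'⟩ | ⟨hw, hw'⟩ <;> linarith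
  · have h1 : (-p - a)/γ ≤ 0 := div_nonpos_of_nonpos_of_nonneg (by linarith) hγ.le
    have h2 : (0:ℝ) ≤ (-p + a)/γ := div_nonneg (by linarith) hγ.le
    rw [max_eq_left h1, min_eq_left h2, zero_add, abs_zero]
    positivity

lemma scale_lemma {A B : ℝ} (hB : 0 ≤ B)
    (h : ∀ t : ℝ, 0 < t → t ≤ 1 → 0 ≤ A * t + B * t^2) : 0 ≤ A := by
  by_contra hA
  push_neg at hA
  set t := min 1 (-A / (B + 1)) with ht
  have hB1 : (0:ℝ) < B + 1 := by linarith
  have h1 : 0 < t := lt_min one_pos (div_pos (by linarith) hB1)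
  have h3 : t ≤ -A / (B + 1) := min_le_right _ _
  have h4 : t * (B + 1) ≤ -A := by
    rw [← le_div_iff₀ hB1]; exact h3
  have := h t h1 (min_le_left _ _)
  nlinarith

lemma abs_affine_le {v d t : ℝ} (h0 : 0 ≤ t) (h1 : t ≤ 1) :
    |v + t * d| - |v| ≤ t * (|v + d| - |v|) := by
  have e : v + t * d = (1 - t) * v + t * (v + d) := by ring
  have : |v + t * d| ≤ (1 - t) * |v| + t * |v + d| := by
    rw [e]
    calc |(1 - t) * v + t * (v + d)| ≤ |(1-t)*v| + |t*(v+d)| := abs_add_le _ _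
      _ = (1 - t) * |v| + t * |v + d| := by
          rw [abs_mul, abs_mul, abs_of_nonneg h0, abs_of_nonneg (by linarith : (0:ℝ) ≤ 1 - t)]
  nlinarith

/-! ### Auxiliary lemmas on `EuclideanSpace` and `Lp` -/

lemma eucl_abs_le_norm {m : ℕ} (x : EuclideanSpace ℝ (Fin m)) (i : Fin m) : |x i| ≤ ‖x‖ := by
  rw [EuclideanSpace.norm_eq, ← Real.sqrt_sq_eq_abs]
  apply Real.sqrt_le_sqrt
  calc x i ^ 2 ≤ ∑ j, x j ^ 2 :=
        Finset.single_le_sum (f := fun j => x j ^ 2) (fun j _ => sq_nonneg _) (Finset.mem_univ i)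
    _ = ∑ j, ‖x j‖ ^ 2 := by simp [Real.norm_eq_abs, sq_abs]

lemma eucl_norm_le_norm {m : ℕ} {x y : EuclideanSpace ℝ (Fin m)} (h : ∀ i, |x i| ≤ |y i|) :
    ‖x‖ ≤ ‖y‖ := by
  rw [EuclideanSpace.norm_eq, EuclideanSpace.norm_eq]
  apply Real.sqrt_le_sqrt
  apply Finset.sum_le_sum
  intro i _
  have := h i
  simp only [Real.norm_eq_abs]
  nlinarith [abs_nonneg (x i), abs_nonneg (y i)]

lemma eucl_inner_eq {m : ℕ} (x y : EuclideanSpace ℝ (Fin m)) : ⟪x, y⟫ = ∑ i, x i * y i := by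
  simp [PiLp.inner_apply, RCLike.inner_apply, mul_comm]

section Meas

set_option linter.unusedSectionVars false

variable {m : ℕ} {μ : Measure ℝ} [IsFiniteMeasure μ]

lemma comp_aesm (f : Lp (EuclideanSpace ℝ (Fin m)) 2 μ) (i : Fin m) :
    AEStronglyMeasurable (fun s => f s i) μ :=
  ((EuclideanSpace.proj i).continuous.comp_aestronglyMeasurable (Lp.aestronglyMeasurable f))

lemma int_norm_sq (f : Lp (EuclideanSpace ℝ (Fin m)) 2 μ) :
    Integrable (fun s => ‖f s‖^2) μ :=
  ((Lp.memLp f).norm).integrable_sq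

lemma int_norm (f : Lp (EuclideanSpace ℝ (Fin m)) 2 μ) :
    Integrable (fun s => ‖f s‖) μ :=
  ((Lp.memLp f).integrable one_le_two).norm

lemma int_sq (f : Lp (EuclideanSpace ℝ (Fin m)) 2 μ) (i : Fin m) :
    Integrable (fun s => (f s i)^2) μ := by
  apply (int_norm_sq f).mono' ((comp_aesm f i).pow 2)
  filter_upwards with s
  simp only [Pi.pow_apply, Real.norm_eq_abs, abs_pow]
  nlinarith [eucl_abs_le_norm (f s) i, abs_nonneg (f s i), norm_nonneg (f s), sq_abs (f s i)]

lemma int_abs (f : Lp (EuclideanSpace ℝ (Fin m)) 2 μ) (i : Fin m) :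
    Integrable (fun s => |f s i|) μ := by
  apply (int_norm f).mono' (continuous_abs.comp_aestronglyMeasurable (comp_aesm f i))
  filter_upwards with s
  simpa using (eucl_abs_le_norm (f s) i).trans (le_abs_self _)

lemma int_mul (f g : Lp (EuclideanSpace ℝ (Fin m)) 2 μ) (i : Fin m) :
    Integrable (fun s => f s i * g s i) μ := by
  apply Integrable.mono' ((int_norm_sq f).add (int_norm_sq g))
    ((comp_aesm f i).mul (comp_aesm g i))
  filter_upwards with s
  simp only [Pi.mul_apply, Pi.add_apply, Real.norm_eq_abs, abs_mul]
  nlinarith [mul_le_mul (eucl_abs_le_norm (f s) i) (eucl_abs_le_norm (g s) i)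
      (abs_nonneg _) (norm_nonneg _), sq_nonneg (‖f s‖ - ‖g s‖),
    abs_nonneg (f s i), abs_nonneg (g s i)]

lemma L2_inner_eq (f g : Lp (EuclideanSpace ℝ (Fin m)) 2 μ) :
    ⟪f, g⟫ = ∫ s, ∑ i, f s i * g s i ∂μ := by
  rw [MeasureTheory.L2.inner_def]
  exact integral_congr_ae (Filter.Eventually.of_forall fun s => eucl_inner_eq _ _)

lemma L2_norm_sq_eq (f : Lp (EuclideanSpace ℝ (Fin m)) 2 μ) :
    ‖f‖^2 = ∫ s, ∑ i, (f s i)^2 ∂μ := by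
  rw [← real_inner_self_eq_norm_sq, L2_inner_eq]
  exact integral_congr_ae (Filter.Eventually.of_forall fun s => by simp [sq])

lemma sum_int_sq (f : Lp (EuclideanSpace ℝ (Fin m)) 2 μ) :
    ∑ i, ∫ s, (f s i)^2 ∂μ = ‖f‖^2 := by
  rw [L2_norm_sq_eq, ← integral_finset_sum _ (fun i _ => int_sq f i)]

end Meas

/-! ### The vector-valued soft-threshold map -/

lemma continuous_softThr (γ a : ℝ) : Continuous (softThr γ a) := by
  unfold softThr
  fun_prop

noncomputable def softThrMap {m : ℕ} (γ : ℝ) (α : Fin m → ℝ) :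
    EuclideanSpace ℝ (Fin m) → EuclideanSpace ℝ (Fin m) :=
  fun x => (WithLp.equiv 2 _).symm (fun i => softThr γ (α i) (x i))

lemma continuous_softThrMap {m : ℕ} (γ : ℝ) (α : Fin m → ℝ) :
    Continuous (softThrMap γ α) := by
  unfold softThrMap
  apply (PiLp.continuous_toLp 2 (fun _ : Fin m => ℝ)).comp
  exact continuous_pi fun i =>
    (continuous_softThr γ (α i)).comp ((continuous_apply i).comp (PiLp.continuous_ofLp 2 _))

lemma softThrMap_apply {m : ℕ} (γ : ℝ) (α : Fin m → ℝ) (x : EuclideanSpace ℝ (Fin m))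
    (i : Fin m) : softThrMap γ α x i = softThr γ (α i) (x i) := rfl

set_option maxHeartbeats 2000000 in
/-- First-order necessary and sufficient optimality conditions for the regularized problem
(P̃_γ): `(v̄,c̄)` is a minimizer iff the soft-thresholding formula (1) and the stationarity
condition (2) hold for the adjoint quantity `(𝔭,q) = K*(K(v̄,c̄) − y_d)`. -/
theorem regularized_first_order_conditions
    (T : ℝ) (hT : 0 < T) (m : ℕ) (hm : 1 ≤ m)
    {H : Type*} [NormedAddCommGroup H] [InnerProductSpace ℝ H] [CompleteSpace H]
    (K : (Lp (EuclideanSpace ℝ (Fin m)) 2 (volume.restrict (Set.Ioo 0 T)) ×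
      EuclideanSpace ℝ (Fin m)) →L[ℝ] H)
    (Kstar : H →L[ℝ] (Lp (EuclideanSpace ℝ (Fin m)) 2 (volume.restrict (Set.Ioo 0 T)) ×
      EuclideanSpace ℝ (Fin m)))
    (hadj : ∀ z w, ⟪K z, w⟫ = ⟪z.1, (Kstar w).1⟫ + ⟪z.2, (Kstar w).2⟫)
    (yd : H) (α : Fin m → ℝ) (hα : ∀ i, 0 < α i)
    (γ κ : ℝ) (hγ : 0 < γ) (hκ : 0 ≤ κ)
    (vbar : Lp (EuclideanSpace ℝ (Fin m)) 2 (volume.restrict (Set.Ioo 0 T)))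
    (cbar : EuclideanSpace ℝ (Fin m)) :
    (∀ w, regCost T m K yd α γ κ (vbar, cbar) ≤ regCost T m K yd α γ κ w) ↔
      ((∀ i, ∀ᵐ s ∂(volume.restrict (Set.Ioo 0 T)),
          vbar s i =
            max 0 (-(1 / γ) * (Kstar (K (vbar, cbar) - yd)).1 s i - α i / γ)
              + min 0 (-(1 / γ) * (Kstar (K (vbar, cbar) - yd)).1 s i + α i / γ)) ∧
        (Kstar (K (vbar, cbar) - yd)).2 + κ • cbar = 0) := by
  haveI : IsFiniteMeasure (volume.restrict (Set.Ioo (0:ℝ) T)) :=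
    ⟨by rw [Measure.restrict_apply_univ]; simp [Real.volume_Ioo]⟩
  set P := (Kstar (K (vbar, cbar) - yd)).1 with hPdef
  set Q := (Kstar (K (vbar, cbar) - yd)).2 with hQdef
  -- the fundamental expansion of the cost difference
  have key : ∀ w : Lp (EuclideanSpace ℝ (Fin m)) 2 (volume.restrict (Set.Ioo 0 T)) ×
      EuclideanSpace ℝ (Fin m),
      regCost T m K yd α γ κ w - regCost T m K yd α γ κ (vbar, cbar) =
        (⟪w.1 - vbar, P⟫ + γ * ⟪vbar, w.1 - vbar⟫
          + ∑ i, α i * ((∫ t, |w.1 t i| ∂(volume.restrict (Set.Ioo 0 T)))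
              - ∫ t, |vbar t i| ∂(volume.restrict (Set.Ioo 0 T)))
          + (γ/2) * ‖w.1 - vbar‖^2)
        + (⟪Q + κ • cbar, w.2 - cbar⟫ + (κ/2) * ‖w.2 - cbar‖^2)
        + (1/2) * ‖K (w - (vbar, cbar))‖^2 := by
    intro w
    have e : K w - yd = (K (vbar, cbar) - yd) + K (w - (vbar, cbar)) := by
      rw [map_sub]; abel
    have hinner : ⟪K (vbar, cbar) - yd, K (w - (vbar, cbar))⟫
        = ⟪w.1 - vbar, P⟫ + ⟪w.2 - cbar, Q⟫ := by
      rw [real_inner_comm, hadj]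
      rw [hPdef, hQdef]
      simp
    have h_norm : ‖K w - yd‖^2 = ‖K (vbar, cbar) - yd‖^2
        + 2 * (⟪w.1 - vbar, P⟫ + ⟪w.2 - cbar, Q⟫) + ‖K (w - (vbar, cbar))‖^2 := by
      rw [e, norm_add_sq_real, hinner]
    have h_pol : ‖w.1‖^2 = ‖vbar‖^2 + 2*⟪vbar, w.1 - vbar⟫ + ‖w.1 - vbar‖^2 := by
      have h := norm_add_sq_real vbar (w.1 - vbar)
      have e2 : vbar + (w.1 - vbar) = w.1 := by abel
      rw [e2] at h
      exact h
    have h_pol2 : ‖w.2‖^2 = ‖cbar‖^2 + 2*⟪cbar, w.2 - cbar⟫ + ‖w.2 - cbar‖^2 := by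
      have h := norm_add_sq_real cbar (w.2 - cbar)
      have e2 : cbar + (w.2 - cbar) = w.2 := by abel
      rw [e2] at h
      exact h
    have h_q : ⟪Q + κ • cbar, w.2 - cbar⟫ = ⟪w.2 - cbar, Q⟫ + κ * ⟪cbar, w.2 - cbar⟫ := by
      rw [inner_add_left, real_inner_smul_left, real_inner_comm Q]
    have h_sum : ∑ i, α i * ((∫ t, |w.1 t i| ∂(volume.restrict (Set.Ioo 0 T)))
          - ∫ t, |vbar t i| ∂(volume.restrict (Set.Ioo 0 T)))
        = (∑ i, α i * ∫ t, |w.1 t i| ∂(volume.restrict (Set.Ioo 0 T)))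
          - ∑ i, α i * ∫ t, |vbar t i| ∂(volume.restrict (Set.Ioo 0 T)) := by
      rw [← Finset.sum_sub_distrib]
      exact Finset.sum_congr rfl fun i _ => mul_sub _ _ _
    have h_sq_w : ∑ i, ∫ t, (w.1 t i)^2 ∂(volume.restrict (Set.Ioo 0 T)) = ‖w.1‖^2 :=
      sum_int_sq w.1
    have h_sq_v : ∑ i, ∫ t, (vbar t i)^2 ∂(volume.restrict (Set.Ioo 0 T)) = ‖vbar‖^2 :=
      sum_int_sq vbar
    simp only [regCost]
    rw [h_norm, h_sq_w, h_sq_v]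
    rw [h_sum]
    linear_combination (γ/2) * h_pol + (κ/2) * h_pol2 - h_q
  -- integrability of the pointwise expansion integrand
  have hIntBig : ∀ f : Lp (EuclideanSpace ℝ (Fin m)) 2 (volume.restrict (Set.Ioo 0 T)),
      Integrable (fun s => ∑ i, ((γ * vbar s i + P s i) * ((f - vbar) s i)
          + α i * (|f s i| - |vbar s i|) + (γ/2) * ((f - vbar) s i)^2))
        (volume.restrict (Set.Ioo 0 T)) := by
    intro f
    apply integrable_finset_sum
    intro i _
    have e : (fun s => (γ * vbar s i + P s i) * ((f - vbar) s i)
          + α i * (|f s i| - |vbar s i|) + (γ/2) * ((f - vbar) s i)^2)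
        = fun s => ((γ * (vbar s i * (f - vbar) s i) + P s i * (f - vbar) s i)
          + α i * (|f s i| - |vbar s i|)) + (γ/2) * ((f - vbar) s i)^2 := by
      funext s; ring
    rw [e]
    exact ((((int_mul vbar (f - vbar) i).const_mul γ).add (int_mul P (f - vbar) i)).add
      (((int_abs f i).sub (int_abs vbar i)).const_mul (α i))).add
      ((int_sq (f - vbar) i).const_mul (γ/2))
  -- the integral form of the `v`-part of the expansion
  have hIE : ∀ f : Lp (EuclideanSpace ℝ (Fin m)) 2 (volume.restrict (Set.Ioo 0 T)),
      ⟪f - vbar, P⟫ + γ * ⟪vbar, f - vbar⟫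
        + ∑ i, α i * ((∫ t, |f t i| ∂(volume.restrict (Set.Ioo 0 T)))
            - ∫ t, |vbar t i| ∂(volume.restrict (Set.Ioo 0 T)))
        + (γ/2) * ‖f - vbar‖^2
      = ∫ s, ∑ i, ((γ * vbar s i + P s i) * ((f - vbar) s i)
          + α i * (|f s i| - |vbar s i|)
          + (γ/2) * ((f - vbar) s i)^2) ∂(volume.restrict (Set.Ioo 0 T)) := by
    intro f
    have hS : ∑ i, α i * ((∫ t, |f t i| ∂(volume.restrict (Set.Ioo 0 T)))
            - ∫ t, |vbar t i| ∂(volume.restrict (Set.Ioo 0 T)))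
        = ∫ s, ∑ i, α i * (|f s i| - |vbar s i|) ∂(volume.restrict (Set.Ioo 0 T)) := by
      have hint : ∀ i : Fin m, Integrable (fun s => α i * (|f s i| - |vbar s i|))
          (volume.restrict (Set.Ioo 0 T)) :=
        fun i => ((int_abs f i).sub (int_abs vbar i)).const_mul (α i)
      rw [integral_finset_sum _ (fun i _ => hint i)]
      refine Finset.sum_congr rfl fun i _ => ?_
      rw [integral_const_mul, integral_sub (int_abs f i) (int_abs vbar i)]
    rw [L2_inner_eq (f - vbar) P, L2_inner_eq vbar (f - vbar), L2_norm_sq_eq (f - vbar), hS,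
      ← integral_const_mul γ, ← integral_const_mul (γ/2)]
    have h1 : Integrable (fun s => ∑ i, (f - vbar) s i * P s i)
        (volume.restrict (Set.Ioo 0 T)) :=
      integrable_finset_sum _ (fun i _ => int_mul (f - vbar) P i)
    have h2 : Integrable (fun s => γ * ∑ i, vbar s i * (f - vbar) s i)
        (volume.restrict (Set.Ioo 0 T)) :=
      (integrable_finset_sum _ (fun i _ => int_mul vbar (f - vbar) i)).const_mul γ
    have h3 : Integrable (fun s => ∑ i, α i * (|f s i| - |vbar s i|))
        (volume.restrict (Set.Ioo 0 T)) :=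
      integrable_finset_sum _
        (fun i _ => ((int_abs f i).sub (int_abs vbar i)).const_mul (α i))
    have h4 : Integrable (fun s => (γ/2) * ∑ i, ((f - vbar) s i)^2)
        (volume.restrict (Set.Ioo 0 T)) :=
      (integrable_finset_sum _ (fun i _ => int_sq (f - vbar) i)).const_mul (γ/2)
    have h12 : Integrable (fun s => (∑ i, (f - vbar) s i * P s i)
        + γ * ∑ i, vbar s i * (f - vbar) s i) (volume.restrict (Set.Ioo 0 T)) := h1.add h2
    have h123 : Integrable (fun s => ((∑ i, (f - vbar) s i * P s i)
        + γ * ∑ i, vbar s i * (f - vbar) s i) + ∑ i, α i * (|f s i| - |vbar s i|))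
        (volume.restrict (Set.Ioo 0 T)) := h12.add h3
    rw [← integral_add h1 h2, ← integral_add h12 h3, ← integral_add h123 h4]
    refine integral_congr_ae (Filter.Eventually.of_forall fun s => ?_)
    dsimp only
    rw [Finset.mul_sum, Finset.mul_sum, ← Finset.sum_add_distrib, ← Finset.sum_add_distrib,
      ← Finset.sum_add_distrib]
    exact Finset.sum_congr rfl fun i _ => by ring
  constructor
  · intro hmin
    have hmin' : ∀ w', 0 ≤ regCost T m K yd α γ κ w' - regCost T m K yd α γ κ (vbar, cbar) :=
      fun w' => by linarith [hmin w']
    -- (a) stationarity in the `c` variable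
    have hAd : ∀ dc : EuclideanSpace ℝ (Fin m), 0 ≤ ⟪Q + κ • cbar, dc⟫ := by
      intro dc
      apply scale_lemma
        (B := (κ/2) * ‖dc‖^2 + (1/2) *
          ‖K ((0 : Lp (EuclideanSpace ℝ (Fin m)) 2 (volume.restrict (Set.Ioo 0 T))), dc)‖^2)
        (by positivity)
      intro t ht ht1
      have hk := key (vbar, cbar + t • dc)
      have hc : ((vbar, cbar + t • dc) :
            Lp (EuclideanSpace ℝ (Fin m)) 2 (volume.restrict (Set.Ioo 0 T)) ×
              EuclideanSpace ℝ (Fin m)) - (vbar, cbar)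
          = t • ((0 : Lp (EuclideanSpace ℝ (Fin m)) 2 (volume.restrict (Set.Ioo 0 T))), dc) := by
        rw [Prod.mk_sub_mk, Prod.smul_mk, smul_zero, sub_self, add_sub_cancel_left]
      rw [hc] at hk
      simp only [add_sub_cancel_left, sub_self, inner_zero_left, inner_zero_right, mul_zero,
        zero_mul, add_zero, zero_add, norm_zero, zero_pow, Finset.sum_const_zero,
        real_inner_smul_right, _root_.map_smul, norm_smul, Real.norm_eq_abs, mul_pow, sq_abs,
        ne_eq, OfNat.ofNat_ne_zero, not_false_eq_true] at hk
      linarith [hmin' (vbar, cbar + t • dc), hk]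
    have hQ0 : Q + κ • cbar = 0 := by
      have h1' := hAd (-(Q + κ • cbar))
      rw [inner_neg_right] at h1'
      exact (inner_self_eq_zero (𝕜 := ℝ)).mp
        (le_antisymm (by linarith) real_inner_self_nonneg)
    -- (b) the soft-thresholding identity
    have haesm : AEStronglyMeasurable (fun s => softThrMap γ α (P s))
        (volume.restrict (Set.Ioo 0 T)) :=
      (continuous_softThrMap γ α).comp_aestronglyMeasurable (Lp.aestronglyMeasurable P)
    have hmem : MemLp (fun s => softThrMap γ α (P s)) 2 (volume.restrict (Set.Ioo 0 T)) := by
      apply MemLp.of_le ((Lp.memLp P).const_smul (1/γ : ℝ)) haesm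
      filter_upwards with s
      have hcomp : ∀ i, |softThrMap γ α (P s) i| ≤ |((1/γ : ℝ) • P s) i| := by
        intro i
        rw [softThrMap_apply]
        have h := softThr_abs_le hγ (hα i).le (P s i)
        have e2 : |((1/γ : ℝ) • P s) i| = |P s i| / γ := by
          have e3 : ((1/γ : ℝ) • P s) i = (1/γ) * P s i := rfl
          rw [e3, abs_mul, abs_of_nonneg (by positivity : (0:ℝ) ≤ 1/γ)]
          ring
        rw [e2]; exact h
      calc ‖softThrMap γ α (P s)‖ ≤ ‖(1/γ : ℝ) • P s‖ := eucl_norm_le_norm hcomp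
        _ = ‖((1/γ : ℝ) • (⇑P)) s‖ := rfl
    set vstar := hmem.toLp _ with hvstar
    have hcoe : ⇑vstar =ᵐ[volume.restrict (Set.Ioo 0 T)]
        (fun s => softThrMap γ α (P s)) := hmem.coeFn_toLp
    -- scaling inequality in the `v` direction
    have hA : 0 ≤ ⟪vstar - vbar, P⟫ + γ * ⟪vbar, vstar - vbar⟫
        + ∑ i, α i * ((∫ s, |vstar s i| ∂(volume.restrict (Set.Ioo 0 T)))
            - ∫ s, |vbar s i| ∂(volume.restrict (Set.Ioo 0 T))) := by
      apply scale_lemma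
        (B := (γ/2) * ‖vstar - vbar‖^2 + (1/2) *
          ‖K (vstar - vbar, (0 : EuclideanSpace ℝ (Fin m)))‖^2)
        (by positivity)
      intro t ht ht1
      have hk := key (vbar + t • (vstar - vbar), cbar)
      have hc : ((vbar + t • (vstar - vbar), cbar) :
            Lp (EuclideanSpace ℝ (Fin m)) 2 (volume.restrict (Set.Ioo 0 T)) ×
              EuclideanSpace ℝ (Fin m)) - (vbar, cbar)
          = t • (vstar - vbar, (0 : EuclideanSpace ℝ (Fin m))) := by
        rw [Prod.mk_sub_mk, Prod.smul_mk, smul_zero, sub_self, add_sub_cancel_left]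
      rw [hc] at hk
      simp only [add_sub_cancel_left, sub_self, inner_zero_left, inner_zero_right, mul_zero,
        zero_mul, add_zero, zero_add, norm_zero, zero_pow, Finset.sum_const_zero,
        real_inner_smul_left, real_inner_smul_right, _root_.map_smul, norm_smul, Real.norm_eq_abs,
        mul_pow, sq_abs, ne_eq, OfNat.ofNat_ne_zero, not_false_eq_true] at hk
      have hSα : ∑ i, α i * ((∫ s, |(vbar + t • (vstar - vbar)) s i|
              ∂(volume.restrict (Set.Ioo 0 T)))
            - ∫ s, |vbar s i| ∂(volume.restrict (Set.Ioo 0 T)))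
          ≤ t * ∑ i, α i * ((∫ s, |vstar s i| ∂(volume.restrict (Set.Ioo 0 T)))
            - ∫ s, |vbar s i| ∂(volume.restrict (Set.Ioo 0 T))) := by
        rw [Finset.mul_sum]
        apply Finset.sum_le_sum
        intro i _
        have e3 : t * (α i * ((∫ s, |vstar s i| ∂(volume.restrict (Set.Ioo 0 T)))
              - ∫ s, |vbar s i| ∂(volume.restrict (Set.Ioo 0 T))))
            = α i * (t * ((∫ s, |vstar s i| ∂(volume.restrict (Set.Ioo 0 T)))
              - ∫ s, |vbar s i| ∂(volume.restrict (Set.Ioo 0 T)))) := by ring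
        rw [e3]
        apply mul_le_mul_of_nonneg_left ?_ (hα i).le
        rw [← integral_sub (int_abs (vbar + t • (vstar - vbar)) i) (int_abs vbar i)]
        have e4 : t * ((∫ s, |vstar s i| ∂(volume.restrict (Set.Ioo 0 T)))
              - ∫ s, |vbar s i| ∂(volume.restrict (Set.Ioo 0 T)))
            = ∫ s, t * (|vstar s i| - |vbar s i|) ∂(volume.restrict (Set.Ioo 0 T)) := by
          rw [integral_const_mul, integral_sub (int_abs vstar i) (int_abs vbar i)]
        rw [e4]
        apply integral_mono_ae ((int_abs _ i).sub (int_abs vbar i))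
          (((int_abs vstar i).sub (int_abs vbar i)).const_mul t)
        filter_upwards [Lp.coeFn_add vbar (t • (vstar - vbar)),
          Lp.coeFn_smul t (vstar - vbar), Lp.coeFn_sub vstar vbar] with s e5 e6 e7
        simp only [Pi.sub_apply]
        have e8 : (vbar + t • (vstar - vbar)) s i = vbar s i + t * (vstar s i - vbar s i) := by
          have e9 : (⇑(vbar + t • (vstar - vbar))) s = vbar s + t • (vstar s - vbar s) := by
            rw [e5]; simp only [Pi.add_apply]; rw [e6]; simp only [Pi.smul_apply]
            rw [e7]; simp only [Pi.sub_apply]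
          rw [e9]; rfl
        rw [e8]
        have h10 := abs_affine_le (v := vbar s i) (d := vstar s i - vbar s i) ht.le ht1
        have e10 : vbar s i + (vstar s i - vbar s i) = vstar s i := by ring
        rw [e10] at h10
        linarith
      linarith [hmin' (vbar + t • (vstar - vbar), cbar), hk, hSα]
    -- upper bound via the pointwise strong convexity estimate
    have hUB : ⟪vstar - vbar, P⟫ + γ * ⟪vbar, vstar - vbar⟫
        + ∑ i, α i * ((∫ s, |vstar s i| ∂(volume.restrict (Set.Ioo 0 T)))
            - ∫ s, |vbar s i| ∂(volume.restrict (Set.Ioo 0 T)))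
        + (γ/2) * ‖vstar - vbar‖^2
        ≤ -(γ/2) * ‖vstar - vbar‖^2 := by
      rw [hIE vstar]
      have hrhs : -(γ/2) * ‖vstar - vbar‖^2
          = ∫ s, ∑ i, (-(γ/2) * ((vstar - vbar) s i)^2) ∂(volume.restrict (Set.Ioo 0 T)) := by
        rw [L2_norm_sq_eq (vstar - vbar), ← integral_const_mul]
        refine integral_congr_ae (Filter.Eventually.of_forall fun s => ?_)
        dsimp only
        rw [Finset.mul_sum]
      rw [hrhs]
      apply integral_mono_ae (hIntBig vstar)
        (integrable_finset_sum _ fun i _ => (int_sq (vstar - vbar) i).const_mul (-(γ/2)))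
      filter_upwards [Lp.coeFn_sub vstar vbar, hcoe] with s e7 e8
      apply Finset.sum_le_sum
      intro i _
      have hstar : vstar s i = softThr γ (α i) (P s i) := by
        rw [e8]; exact softThrMap_apply γ α (P s) i
      have hsub : (vstar - vbar) s i = softThr γ (α i) (P s i) - vbar s i := by
        rw [e7]; simp only [Pi.sub_apply, PiLp.sub_apply]; rw [hstar]
      rw [hsub, hstar]
      linarith [softThr_lb hγ (hα i).le (P s i) (vbar s i)]
    -- conclude `vstar = vbar`
    have hd0 : vstar = vbar := by
      have hX : ‖vstar - vbar‖^2 ≤ 0 := by nlinarith [hA, hUB]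
      have hn : ‖vstar - vbar‖ = 0 := by
        nlinarith [norm_nonneg (vstar - vbar), sq_nonneg ‖vstar - vbar‖]
      exact sub_eq_zero.mp (norm_eq_zero.mp hn)
    have hveq : ⇑vbar =ᵐ[volume.restrict (Set.Ioo 0 T)]
        (fun s => softThrMap γ α (P s)) := by
      rw [← hd0]; exact hcoe
    refine ⟨?_, hQ0⟩
    intro i
    filter_upwards [hveq] with s hs
    have hfin : vbar s i = softThrMap γ α (P s) i := by rw [hs]
    exact hfin
  · rintro ⟨h1, h2⟩ w
    have hkey := key w
    have h2' : ⟪Q + κ • cbar, w.2 - cbar⟫ = 0 := by rw [h2, inner_zero_left]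
    have hvpart : 0 ≤ ∫ s, ∑ i, ((γ * vbar s i + P s i) * ((w.1 - vbar) s i)
        + α i * (|w.1 s i| - |vbar s i|)
        + (γ/2) * ((w.1 - vbar) s i)^2) ∂(volume.restrict (Set.Ioo 0 T)) := by
      apply integral_nonneg_of_ae
      filter_upwards [Lp.coeFn_sub w.1 vbar, ae_all_iff.2 h1] with s hs hthr
      apply Finset.sum_nonneg
      intro i _
      have hv : vbar s i = softThr γ (α i) (P s i) := hthr i
      have hsub : (w.1 - vbar) s i = w.1 s i - vbar s i := by rw [hs]; rfl
      rw [hsub, hv]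
      nlinarith [softThr_opt hγ (hα i).le (P s i) (w.1 s i),
        sq_nonneg (w.1 s i - softThr γ (α i) (P s i))]
    have e1 := hIE w.1
    linarith [hkey, hvpart, h2', e1,
      mul_nonneg (by linarith : (0:ℝ) ≤ κ/2) (sq_nonneg ‖w.2 - cbar‖),
      mul_nonneg (by norm_num : (0:ℝ) ≤ (1:ℝ)/2) (sq_nonneg ‖K (w - (vbar, cbar))‖)]
end
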